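/- arXiv:1606.07352 — 2 statements merged into one kernel-verified Lean document; each statement's English description precedes it below -/
import Mathlib

section
/- The non-autonomous composition F(s) = X₂(t−s, X₁(s, X⁽⁰⁾)) has derivative F′(s) = (∂X₂/∂X⁽⁰⁾)(t−s, X₁(s, X⁽⁰⁾)) · (V₁ − V₂)(X₁(s, X⁽⁰⁾)). -/
open Set Metric Real


lemma gronwall_contain {E : Type*} [NormedAddCommGroup E] [NormedSpace ℝ E]
    (V : E → E) (K : NNReal) (B : Set E) (hlip : LipschitzOnWith K V B)
    (f g : ℝ → E) (hf : ∀ σ, HasDerivAt f (V (f σ)) σ) (hg : ∀ σ, HasDerivAt g (V (g σ)) σ)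
    (T r : ℝ) (hT : 0 ≤ T) (hr : 0 < r)
    (hgB : ∀ σ ∈ Icc 0 T, closedBall (g σ) r ⊆ B)
    (hd : dist (f 0) (g 0) * Real.exp (K * T) ≤ r / 2) :
    ∀ σ ∈ Icc 0 T, dist (f σ) (g σ) ≤ dist (f 0) (g 0) * Real.exp (K * σ) := by
  have hcf : Continuous f := continuous_iff_continuousAt.2 fun σ => (hf σ).continuousAt
  have hcg : Continuous g := continuous_iff_continuousAt.2 fun σ => (hg σ).continuousAt
  have hdc : Continuous fun σ => dist (f σ) (g σ) := hcf.dist hcg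
  have key : ∀ x ∈ Icc 0 T, (∀ σ ∈ Icc 0 x, dist (f σ) (g σ) ≤ r) →
      ∀ σ ∈ Icc 0 x, dist (f σ) (g σ) ≤ dist (f 0) (g 0) * Real.exp (K * σ) := by
    intro x hx hcont σ hσ
    have := dist_le_of_trajectories_ODE_of_mem (v := fun _ y => V y) (s := fun _ => B)
      (K := K) (f := f) (g := g) (a := 0) (b := x) (δ := dist (f 0) (g 0))
      (fun _ _ => hlip)
      (hcf.continuousOn)
      (fun σ' _ => (hf σ').hasDerivWithinAt)
      (fun σ' hσ' => hgB σ' ⟨hσ'.1, hσ'.2.le.trans hx.2⟩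
        (mem_closedBall.2 (hcont σ' ⟨hσ'.1, hσ'.2.le⟩))
      )
      (hcg.continuousOn)
      (fun σ' _ => (hg σ').hasDerivWithinAt)
      (fun σ' hσ' => hgB σ' ⟨hσ'.1, hσ'.2.le.trans hx.2⟩ (mem_closedBall_self hr.le))
      le_rfl σ hσ
    simpa using this
  set S : Set ℝ := {x | ∀ σ ∈ Icc 0 x, dist (f σ) (g σ) ≤ r} with hS
  have expmono : ∀ σ ∈ Icc 0 T, dist (f 0) (g 0) * Real.exp (K * σ) ≤ r / 2 := by
    intro σ hσ
    refine le_trans ?_ hd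
    exact mul_le_mul_of_nonneg_left (exp_le_exp.2 (mul_le_mul_of_nonneg_left hσ.2 K.2)) dist_nonneg
  have hmain : Icc 0 T ⊆ S := by
    apply IsClosed.Icc_subset_of_forall_exists_gt
    · apply IsSeqClosed.isClosed
      intro xs x hxs hlim
      have hxIcc : x ∈ Icc 0 T :=
        isClosed_Icc.mem_of_tendsto hlim (Filter.Eventually.of_forall fun k => (hxs k).2)
      refine ⟨?_, hxIcc⟩
      intro σ hσ
      rcases eq_or_lt_of_le hσ.2 with h | h
      · subst h
        refine le_of_tendsto (hdc.continuousAt.tendsto.comp hlim) ?_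
        exact Filter.Eventually.of_forall fun k => (hxs k).1 (xs k) ⟨(hxs k).2.1, le_rfl⟩
      · have : ∀ᶠ k in Filter.atTop, σ < xs k := hlim.eventually_const_lt h
        rcases this.exists with ⟨k, hk⟩
        exact (hxs k).1 σ ⟨hσ.1, hk.le⟩
    · intro σ hσ
      have h0 : σ = 0 := le_antisymm hσ.2 hσ.1
      subst h0
      have : dist (f 0) (g 0) ≤ r / 2 := by
        refine le_trans ?_ hd
        nth_rewrite 1 [← mul_one (dist (f 0) (g 0))]
        exact mul_le_mul_of_nonneg_left (one_le_exp (by positivity)) dist_nonneg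
      linarith
    · rintro x ⟨hxS, hxIco⟩ y hy
      have hbd := key x ⟨hxIco.1, hxIco.2.le⟩ hxS
      have hx2 : dist (f x) (g x) ≤ r / 2 :=
        (hbd x ⟨hxIco.1, le_rfl⟩).trans (expmono x ⟨hxIco.1, hxIco.2.le⟩)
      have hev : ∀ᶠ u in nhds x, dist (f u) (g u) < r :=
        hdc.continuousAt.tendsto.eventually_lt_const (by linarith)
      rcases Metric.eventually_nhds_iff.1 hev with ⟨ε, hε, hball⟩
      refine ⟨min y (x + ε / 2), ⟨?_, ⟨lt_min hy (by linarith), min_le_left _ _⟩⟩⟩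
      intro σ hσ
      rcases le_or_gt σ x with h | h
      · exact hxS σ ⟨hσ.1, h⟩
      · refine (hball (y := σ) ?_).le
        rw [Real.dist_eq, abs_of_pos (by linarith)]
        have : σ ≤ x + ε / 2 := hσ.2.trans (min_le_right _ _)
        linarith
  intro σ hσ
  exact key T (right_mem_Icc.2 hT) (hmain (right_mem_Icc.2 hT)) σ hσ

lemma hasDerivWithinAt_singleton' {F : Type*} [NormedAddCommGroup F] [NormedSpace ℝ F]
    (f : ℝ → F) (f' : F) (x : ℝ) : HasDerivWithinAt f f' {x} x := by
  rw [hasDerivWithinAt_iff_isLittleO, nhdsWithin_singleton, Asymptotics.isLittleO_pure]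
  simp

lemma linear_ode_exists {F : Type*} [NormedAddCommGroup F] [NormedSpace ℝ F] [CompleteSpace F]
    (A : ℝ → F →L[ℝ] F) (hA : Continuous A) (T L₀ : ℝ) (hT : 0 ≤ T) (hL : 0 < L₀)
    (hAb : ∀ σ ∈ Icc 0 T, ‖A σ‖ ≤ L₀) (x₀ : F) :
    ∃ M : ℝ → F, M 0 = x₀ ∧ ∀ σ ∈ Icc 0 T, HasDerivWithinAt M (A σ (M σ)) (Icc 0 T) σ := by
  set Rmax : ℝ := (‖x₀‖ + 1) * Real.exp (L₀ * T) with hRmax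
  have hRpos : 0 < Rmax + 1 := by positivity
  set h : ℝ := 1 / (L₀ * (Rmax + 1)) with hh
  have hhpos : 0 < h := by positivity
  -- a priori bound
  have apri : ∀ c ∈ Icc 0 T, ∀ M : ℝ → F, M 0 = x₀ →
      (∀ σ ∈ Icc 0 c, HasDerivWithinAt M (A σ (M σ)) (Icc 0 c) σ) →
      ∀ σ ∈ Icc 0 c, ‖M σ‖ ≤ Rmax := by
    intro c hc M hM0 hM σ hσ
    have hbd := norm_le_gronwallBound_of_norm_deriv_right_le (f := M)
      (f' := fun σ => A σ (M σ)) (δ := ‖x₀‖) (K := L₀) (ε := 0) (a := 0) (b := c)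
      (fun σ' hσ' => (hM σ' hσ').continuousWithinAt)
      (fun σ' hσ' => (hM σ' (Ico_subset_Icc_self hσ')).mono_of_mem_nhdsWithin
        (Icc_mem_nhdsGE_of_mem hσ'))
      (by rw [hM0])
      (fun σ' hσ' => by
        have h1 : ‖A σ' (M σ')‖ ≤ ‖A σ'‖ * ‖M σ'‖ := (A σ').le_opNorm _
        have h2 : ‖A σ'‖ ≤ L₀ := hAb σ' ⟨hσ'.1, hσ'.2.le.trans hc.2⟩
        have := mul_le_mul_of_nonneg_right h2 (norm_nonneg (M σ'))
        simpa using h1.trans this)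
      σ hσ
    rw [gronwallBound_ε0, sub_zero] at hbd
    refine hbd.trans ?_
    rw [hRmax]
    have h1 : Real.exp (L₀ * σ) ≤ Real.exp (L₀ * T) :=
      Real.exp_le_exp.2 (mul_le_mul_of_nonneg_left (hσ.2.trans hc.2) hL.le)
    have h2 : ‖x₀‖ ≤ ‖x₀‖ + 1 := by linarith
    exact mul_le_mul h2 h1 (Real.exp_pos _).le (by positivity)
  -- inductive extension
  have step : ∀ k : ℕ, ∃ M : ℝ → F, M 0 = x₀ ∧
      ∀ σ ∈ Icc 0 (min (k * h) T), HasDerivWithinAt M (A σ (M σ)) (Icc 0 (min (k * h) T)) σ := by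
    intro k
    induction k with
    | zero =>
      refine ⟨fun _ => x₀, rfl, ?_⟩
      intro σ hσ
      simp only [Nat.cast_zero, zero_mul, min_eq_left hT] at hσ ⊢
      have hσ0 : σ = 0 := le_antisymm hσ.2 hσ.1
      subst hσ0
      rw [Icc_self]
      exact hasDerivWithinAt_singleton' _ _ _
    | succ k ih =>
      obtain ⟨M₁, hM₁0, hM₁⟩ := ih
      set c : ℝ := min (k * h) T with hc
      have hc0 : 0 ≤ c := le_min (by positivity) hT
      by_cases hcT : T ≤ k * h
      · have e1 : c = T := min_eq_right hcT
        have e2 : min (((k + 1 : ℕ) : ℝ) * h) T = T := by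
          refine min_eq_right (hcT.trans ?_)
          push_cast
          nlinarith [hhpos]
        rw [e2, ← e1]
        exact ⟨M₁, hM₁0, hM₁⟩
      · push_neg at hcT
        have e1 : c = k * h := min_eq_left hcT.le
        set y₀ : F := M₁ c with hy₀
        have hy₀b : ‖y₀‖ ≤ Rmax :=
          apri c ⟨hc0, min_le_right _ _⟩ M₁ hM₁0 hM₁ c ⟨hc0, le_rfl⟩
        set h' : ℝ := min h (T - c) with hh'
        have hcTlt : c < T := by
          rw [e1]; exact hcT
        have hh'pos : 0 < h' := lt_min hhpos (by linarith)
        have hsub : Icc c (c + h') ⊆ Icc 0 T := by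
          apply Icc_subset_Icc hc0
          have : h' ≤ T - c := min_le_right _ _
          linarith
        have hpl : IsPicardLindelof (fun σ x => A σ x) (tmin := c) (tmax := c + h')
            ⟨c, le_rfl, by linarith⟩ y₀ 1 0 (L₀ * (Rmax + 1)).toNNReal L₀.toNNReal := by
          refine ⟨?_, ?_, ?_, ?_⟩
          · intro σ hσ
            have hb : ‖A σ‖₊ ≤ L₀.toNNReal := by
              rw [← NNReal.coe_le_coe, coe_nnnorm, Real.coe_toNNReal _ hL.le]
              exact hAb σ (hsub hσ)
            exact ((A σ).lipschitz.weaken hb).lipschitzOnWith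
          · intro x _
            exact ((ContinuousLinearMap.apply ℝ F x).continuous.comp hA).continuousOn
          · intro σ hσ x hx
            have h1 : ‖A σ x‖ ≤ ‖A σ‖ * ‖x‖ := (A σ).le_opNorm _
            have h2 : ‖A σ‖ ≤ L₀ := hAb σ (hsub hσ)
            have hxn : ‖x‖ ≤ Rmax + 1 := by
              have hd : ‖x - y₀‖ ≤ 1 := by
                rw [← dist_eq_norm]; exact_mod_cast mem_closedBall.1 hx
              have hx2 : ‖x‖ ≤ ‖y₀‖ + ‖x - y₀‖ := by
                calc ‖x‖ = ‖y₀ + (x - y₀)‖ := by rw [add_sub_cancel]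
                  _ ≤ ‖y₀‖ + ‖x - y₀‖ := norm_add_le _ _
              linarith
            calc ‖A σ x‖ ≤ ‖A σ‖ * ‖x‖ := h1
              _ ≤ L₀ * (Rmax + 1) := mul_le_mul h2 hxn (norm_nonneg _) hL.le
              _ = ((L₀ * (Rmax + 1)).toNNReal : ℝ) := (Real.coe_toNNReal _ (by positivity)).symm
          · have hm : max (c + h' - c) (c - c) = h' := by
              rw [add_sub_cancel_left, sub_self]
              exact max_eq_left hh'pos.le
            have hLc : ((L₀ * (Rmax + 1)).toNNReal : ℝ) = L₀ * (Rmax + 1) :=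
              Real.coe_toNNReal _ (by positivity)
            show ((L₀ * (Rmax + 1)).toNNReal : ℝ) * max (c + h' - c) (c - c) ≤ _
            rw [hLc, hm]
            have : L₀ * (Rmax + 1) * h' ≤ L₀ * (Rmax + 1) * h :=
              mul_le_mul_of_nonneg_left (min_le_left _ _) (by positivity)
            refine this.trans (le_of_eq ?_)
            rw [hh, mul_one_div_cancel (by positivity)]
            simp
        obtain ⟨M₂, hM₂0', hM₂⟩ := hpl.exists_eq_forall_mem_Icc_hasDerivWithinAt₀
        have hM₂0 : M₂ c = y₀ := hM₂0'
        have hb : min (((k + 1 : ℕ) : ℝ) * h) T = c + h' := by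
          rw [hh', e1]
          push_cast
          rw [add_mul, one_mul]
          rcases le_total h (T - (k : ℝ) * h) with hle | hle
          · rw [min_eq_left hle, min_eq_left (by linarith)]
          · rw [min_eq_right hle, min_eq_right (by linarith)]
            ring
        refine ⟨fun σ => if σ ≤ c then M₁ σ else M₂ σ,
          show (if (0:ℝ) ≤ c then M₁ 0 else M₂ 0) = x₀ by rw [if_pos hc0]; exact hM₁0, ?_⟩
        rw [hb]
        intro σ hσ
        have hval : ∀ x ∈ Icc c (c + h'), (if x ≤ c then M₁ x else M₂ x) = M₂ x := by
          intro x hx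
          by_cases hxc : x ≤ c
          · have : x = c := le_antisymm hxc hx.1
            rw [if_pos hxc, this, ← hy₀, hM₂0]
          · rw [if_neg hxc]
        rcases lt_trichotomy σ c with hσc | hσc | hσc
        · have hmem : Icc 0 c ∈ nhdsWithin σ (Icc 0 (c + h')) := by
            refine Filter.mem_of_superset
              (Filter.inter_mem self_mem_nhdsWithin
                (mem_nhdsWithin_of_mem_nhds (Iio_mem_nhds hσc))) ?_
            rintro x ⟨hx1, hx2⟩
            exact ⟨hx1.1, le_of_lt hx2⟩
          have hd1 : HasDerivWithinAt M₁ (A σ (M₁ σ)) (Icc 0 (c + h')) σ :=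
            (hM₁ σ ⟨hσ.1, hσc.le⟩).mono_of_mem_nhdsWithin hmem
          have heq : ∀ᶠ x in nhdsWithin σ (Icc 0 (c + h')),
              (if x ≤ c then M₁ x else M₂ x) = M₁ x := by
            refine Filter.eventually_iff_exists_mem.2 ⟨Iio c,
              mem_nhdsWithin_of_mem_nhds (Iio_mem_nhds hσc), fun x hx => if_pos (le_of_lt hx)⟩
          have := hd1.congr_of_eventuallyEq heq (by rw [if_pos hσc.le])
          simpa [if_pos hσc.le] using this
        · rw [hσc]
          have h1 : HasDerivWithinAt M₁ (A c (M₁ c)) (Icc 0 c) c := hM₁ c ⟨hc0, le_rfl⟩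
          have h2 : HasDerivWithinAt M₂ (A c (M₂ c)) (Icc c (c + h')) c :=
            hM₂ c ⟨le_rfl, by linarith⟩
          have h1' : HasDerivWithinAt (fun x => if x ≤ c then M₁ x else M₂ x)
              (A c (M₁ c)) (Icc 0 c) c :=
            h1.congr (fun x hx => if_pos hx.2) (by rw [if_pos le_rfl])
          have h2' : HasDerivWithinAt (fun x => if x ≤ c then M₁ x else M₂ x)
              (A c (M₂ c)) (Icc c (c + h')) c :=
            h2.congr hval (hval c ⟨le_rfl, by linarith⟩)
          have hM₂σ : M₂ c = M₁ c := hM₂0.trans hy₀.symm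
          rw [hM₂σ] at h2'
          have hu := h1'.union h2'
          rw [Icc_union_Icc_eq_Icc hc0 (by linarith)] at hu
          simpa [if_pos (le_refl c)] using hu
        · have hmem : Icc c (c + h') ∈ nhdsWithin σ (Icc 0 (c + h')) := by
            refine Filter.mem_of_superset
              (Filter.inter_mem self_mem_nhdsWithin
                (mem_nhdsWithin_of_mem_nhds (Ioi_mem_nhds hσc))) ?_
            rintro x ⟨hx1, hx2⟩
            exact ⟨le_of_lt hx2, hx1.2⟩
          have hd2 : HasDerivWithinAt M₂ (A σ (M₂ σ)) (Icc 0 (c + h')) σ :=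
            (hM₂ σ ⟨hσc.le, hσ.2⟩).mono_of_mem_nhdsWithin hmem
          have heq : ∀ᶠ x in nhdsWithin σ (Icc 0 (c + h')),
              (if x ≤ c then M₁ x else M₂ x) = M₂ x := by
            refine Filter.eventually_iff_exists_mem.2 ⟨Ioi c,
              mem_nhdsWithin_of_mem_nhds (Ioi_mem_nhds hσc),
              fun x hx => if_neg (not_le.2 hx)⟩
          have := hd2.congr_of_eventuallyEq heq (by rw [if_neg (not_le.2 hσc)])
          simpa [if_neg (not_le.2 hσc)] using this
  obtain ⟨M, hM0, hM⟩ := step ⌈T / h⌉₊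
  have hTk : T ≤ (⌈T / h⌉₊ : ℝ) * h := by
    rw [← div_le_iff₀ hhpos]
    exact Nat.le_ceil _
  rw [min_eq_right hTk] at hM
  exact ⟨M, hM0, hM⟩

set_option maxHeartbeats 1000000 in
lemma flow_key {E : Type*} [NormedAddCommGroup E] [NormedSpace ℝ E] [FiniteDimensional ℝ E]
    (V : E → E) (hV : ContDiff ℝ 1 V)
    (X : ℝ → E → E) (hX0 : ∀ y, X 0 y = y)
    (hX : ∀ s y, HasDerivAt (fun u => X u y) (V (X s y)) s)
    (t : ℝ) (ht : 0 ≤ t) (z : E) (τ₀ : ℝ) (hτ : τ₀ ∈ Icc 0 t) :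
    ∃ W : E →L[ℝ] E, HasFDerivAt (X τ₀) W z ∧ W (V z) = V (X τ₀ z) ∧
      ∀ ε > 0, ∃ δ > 0, ∀ σ w, |σ - τ₀| ≤ δ → ‖w - z‖ ≤ δ → ‖X σ w - X τ₀ z‖ ≤ ε := by
  have hVd : Differentiable ℝ V := hV.differentiable one_ne_zero
  set γ : ℝ → E := fun σ => X σ z with hγ
  have hγc : Continuous γ := continuous_iff_continuousAt.2 fun σ => (hX σ z).continuousAt
  have hγ0 : γ 0 = z := hX0 z
  obtain ⟨RΓ, hRΓ⟩ := ((isCompact_Icc (a := (-1:ℝ)) (b := t+1)).image hγc).exists_bound_of_continuousOn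
    continuousOn_id
  set B : Set E := closedBall 0 (RΓ + 2) with hB
  have hballs : ∀ σ ∈ Icc (-1 : ℝ) (t+1), closedBall (γ σ) 1 ⊆ B := by
    intro σ hσ x hx
    have h1 : ‖γ σ‖ ≤ RΓ := hRΓ (γ σ) (mem_image_of_mem γ hσ)
    have h2 : ‖x - γ σ‖ ≤ 1 := by rw [← dist_eq_norm]; exact mem_closedBall.1 hx
    have : ‖x‖ ≤ ‖γ σ‖ + ‖x - γ σ‖ := by
      calc ‖x‖ = ‖γ σ + (x - γ σ)‖ := by rw [add_sub_cancel]
        _ ≤ ‖γ σ‖ + ‖x - γ σ‖ := norm_add_le _ _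
    rw [mem_closedBall, dist_zero_right]
    linarith
  set DV : E → E →L[ℝ] E := fderiv ℝ V with hDV
  have hDVc : Continuous DV := hV.continuous_fderiv one_ne_zero
  have hBc : IsCompact B := isCompact_closedBall 0 _
  obtain ⟨CB0, hCB0⟩ := hBc.exists_bound_of_continuousOn hDVc.continuousOn
  set CB : ℝ := max CB0 0 with hCB'
  have hCB : ∀ x ∈ B, ‖DV x‖ ≤ CB := fun x hx => (hCB0 x hx).trans (le_max_left _ _)
  have hCBnn : 0 ≤ CB := le_max_right _ _
  set Kc : ℝ := CB + 1 with hKc'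
  have hKc1 : 1 ≤ Kc := by linarith
  have hKcpos : 0 < Kc := by linarith
  set K : NNReal := Kc.toNNReal with hK'
  have hKcoe : (K : ℝ) = Kc := Real.coe_toNNReal _ hKcpos.le
  have hVlip : LipschitzOnWith K V B := by
    refine Convex.lipschitzOnWith_of_nnnorm_fderiv_le (fun x _ => hVd x) (fun x hx => ?_)
      (convex_closedBall 0 _)
    rw [← NNReal.coe_le_coe, coe_nnnorm, hKcoe]
    exact (hCB x hx).trans (by linarith)
  set C₂ : ℝ := Real.exp (Kc * (t+1)) with hC₂'
  have hC₂pos : 0 < C₂ := Real.exp_pos _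
  have hC₂1 : 1 ≤ C₂ := Real.one_le_exp (by positivity)
  have hmemIcc : ∀ σ ∈ Icc (0:ℝ) (t+1), σ ∈ Icc (-1:ℝ) (t+1) :=
    fun σ hσ => ⟨by linarith [hσ.1], hσ.2⟩
  -- Lipschitz dependence on initial conditions, on [-1, t+1]
  have hLip : ∀ w, dist w z * C₂ ≤ 1/2 → ∀ σ ∈ Icc (-1 : ℝ) (t+1),
      dist (X σ w) (γ σ) ≤ dist w z * C₂ := by
    intro w hw σ hσ
    rcases le_or_gt 0 σ with h0 | h0
    · have hfor := gronwall_contain V K B hVlip (fun σ => X σ w) γ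
        (fun σ => hX σ w) (fun σ => hX σ z) (t+1) 1 (by linarith) one_pos
        (fun σ' hσ' => hballs σ' (hmemIcc σ' hσ'))
        (by simpa [hX0, hγ0, hKcoe, hC₂'] using hw)
        σ ⟨h0, hσ.2⟩
      have hfor' : dist (X σ w) (γ σ) ≤ dist w z * Real.exp (Kc * σ) := by
        simpa [hX0, hγ0, hKcoe] using hfor
      refine hfor'.trans ?_
      rw [hC₂']
      exact mul_le_mul_of_nonneg_left
        (Real.exp_le_exp.2 (mul_le_mul_of_nonneg_left hσ.2 hKcpos.le)) dist_nonneg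
    · have hnegf : ∀ (w' : E) (ρ : ℝ), HasDerivAt (fun u => X (-u) w')
          ((fun x => -V x) (X (-ρ) w')) ρ := by
        intro w' ρ
        have h := (hX (-ρ) w').scomp ρ (hasDerivAt_neg ρ)
        simpa [Function.comp_def] using h
      have hback := gronwall_contain (fun x => -V x) K B hVlip.neg
        (fun ρ => X (-ρ) w) (fun ρ => X (-ρ) z)
        (fun ρ => hnegf w ρ) (fun ρ => hnegf z ρ) 1 1 zero_le_one one_pos
        (fun ρ hρ => hballs (-ρ) ⟨by linarith [hρ.2], by linarith [hρ.1]⟩)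
        (by
          have hexp : Real.exp (Kc * 1) ≤ C₂ := by
            rw [hC₂']
            exact Real.exp_le_exp.2 (by nlinarith [hKcpos])
          have hee : dist w z * Real.exp (Kc * 1) ≤ 1/2 :=
            le_trans (mul_le_mul_of_nonneg_left hexp dist_nonneg) hw
          simpa [hX0, hKcoe] using hee)
        (-σ) ⟨by linarith, by linarith [hσ.1]⟩
      have hback' : dist (X σ w) (γ σ) ≤ dist w z * Real.exp (Kc * (-σ)) := by
        simpa [hX0, hKcoe, hγ] using hback
      refine hback'.trans ?_
      rw [hC₂']
      refine mul_le_mul_of_nonneg_left (Real.exp_le_exp.2 ?_) dist_nonneg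
      nlinarith [hKcpos, hσ.1, ht]
  set δ₀ : ℝ := (1/2) / C₂ with hδ₀'
  have hδ₀pos : 0 < δ₀ := by positivity
  have hδ₀ : ∀ (w : E), dist w z ≤ δ₀ → dist w z * C₂ ≤ 1/2 := by
    intro w hw
    rw [hδ₀'] at hw
    calc dist w z * C₂ ≤ ((1/2)/C₂) * C₂ := mul_le_mul_of_nonneg_right hw hC₂pos.le
      _ = 1/2 := div_mul_cancel₀ _ hC₂pos.ne'
  -- joint continuity
  have hJC : ∀ ε > 0, ∃ δ > 0, ∀ σ w, |σ - τ₀| ≤ δ → ‖w - z‖ ≤ δ →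
      ‖X σ w - X τ₀ z‖ ≤ ε := by
    intro ε hε
    obtain ⟨δ₁, hδ₁pos, hδ₁⟩ := Metric.continuousAt_iff.1 (hγc.continuousAt : ContinuousAt γ τ₀) (ε/2) (half_pos hε)
    refine ⟨min (min (δ₁/2) 1) (min δ₀ ((ε/2)/C₂)), by positivity, ?_⟩
    intro σ w hσ hwz
    have hσ1 : |σ - τ₀| ≤ 1 := hσ.trans ((min_le_left _ _).trans (min_le_right _ _))
    have hσa := abs_le.1 hσ1
    have hσmem : σ ∈ Icc (-1:ℝ) (t+1) := ⟨by linarith [hτ.1], by linarith [hτ.2]⟩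
    have hwd : dist w z ≤ min δ₀ ((ε/2)/C₂) := by
      rw [dist_eq_norm]; exact hwz.trans (min_le_right _ _)
    have h1 : dist (X σ w) (γ σ) ≤ dist w z * C₂ :=
      hLip w (hδ₀ w (hwd.trans (min_le_left _ _))) σ hσmem
    have h1' : dist (X σ w) (γ σ) ≤ ε/2 := by
      refine h1.trans ?_
      calc dist w z * C₂ ≤ ((ε/2)/C₂) * C₂ :=
            mul_le_mul_of_nonneg_right (hwd.trans (min_le_right _ _)) hC₂pos.le
        _ = ε/2 := div_mul_cancel₀ _ hC₂pos.ne'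
    have h2 : dist (γ σ) (γ τ₀) < ε/2 := by
      apply hδ₁
      rw [Real.dist_eq]
      exact lt_of_le_of_lt (hσ.trans ((min_le_left _ _).trans (min_le_left _ _)))
        (by linarith)
    have := dist_triangle (X σ w) (γ σ) (γ τ₀)
    rw [← dist_eq_norm]
    have hγτ : γ τ₀ = X τ₀ z := by rw [hγ]
    calc dist (X σ w) (X τ₀ z) = dist (X σ w) (γ τ₀) := by rw [hγτ]
      _ ≤ dist (X σ w) (γ σ) + dist (γ σ) (γ τ₀) := dist_triangle _ _ _
      _ ≤ ε := by linarith
  -- variational equation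
  set A : ℝ → E →L[ℝ] E := fun σ => DV (γ σ) with hA'
  have hAc : Continuous A := hDVc.comp hγc
  have hγmem : ∀ σ ∈ Icc (-1:ℝ) (t+1), γ σ ∈ B :=
    fun σ hσ => hballs σ hσ (mem_closedBall_self zero_le_one)
  have hAb : ∀ σ ∈ Icc (-1:ℝ) (t+1), ‖A σ‖ ≤ Kc :=
    fun σ hσ => (hCB _ (hγmem σ hσ)).trans (by linarith)
  set Acomp : ℝ → (E →L[ℝ] E) →L[ℝ] (E →L[ℝ] E) :=
    fun σ => ContinuousLinearMap.compL ℝ E E E (A σ) with hAcomp'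
  have hAcompc : Continuous Acomp :=
    (ContinuousLinearMap.compL ℝ E E E).continuous.comp hAc
  have hAcompb : ∀ σ ∈ Icc (0:ℝ) t, ‖Acomp σ‖ ≤ Kc := by
    intro σ hσ
    refine ContinuousLinearMap.opNorm_le_bound _ hKcpos.le fun N => ?_
    calc ‖(A σ).comp N‖ ≤ ‖A σ‖ * ‖N‖ := ContinuousLinearMap.opNorm_comp_le _ _
      _ ≤ Kc * ‖N‖ := mul_le_mul_of_nonneg_right
          (hAb σ ⟨by linarith [hσ.1], by linarith [hσ.2]⟩) (norm_nonneg _)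
  obtain ⟨M, hM0, hMd⟩ := linear_ode_exists Acomp hAcompc t Kc ht hKcpos hAcompb
    (ContinuousLinearMap.id ℝ E)
  have hMc : ContinuousOn M (Icc 0 t) := fun σ hσ => (hMd σ hσ).continuousWithinAt
  have hMIci : ∀ σ ∈ Ico 0 τ₀, HasDerivWithinAt M (Acomp σ (M σ)) (Ici σ) σ :=
    fun σ hσ => (hMd σ ⟨hσ.1, hσ.2.le.trans hτ.2⟩).mono_of_mem_nhdsWithin
      (Icc_mem_nhdsGE_of_mem ⟨hσ.1, lt_of_lt_of_le hσ.2 hτ.2⟩)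
  -- uniform continuity of DV on B
  have hUC : ∀ ε > 0, ∃ ρ, 0 < ρ ∧ ρ ≤ 1 ∧ ∀ x ∈ B, ∀ y ∈ B, dist x y ≤ ρ →
      ‖DV x - DV y‖ ≤ ε := by
    intro ε hε
    rcases Metric.uniformContinuousOn_iff.1
      (hBc.uniformContinuousOn_of_continuous hDVc.continuousOn) ε hε with ⟨ρ₀, hρ₀, hρ⟩
    refine ⟨min (ρ₀/2) 1, by positivity, min_le_right _ _, ?_⟩
    intro x hx y hy hxy
    have h := hρ x hx y hy (lt_of_le_of_lt (hxy.trans (min_le_left _ _)) (by linarith))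
    rw [dist_eq_norm] at h
    exact h.le
  -- Fréchet differentiability of X τ₀ at z
  have hW : HasFDerivAt (X τ₀) (M τ₀) z := by
    rw [hasFDerivAt_iff_isLittleO_nhds_zero, Asymptotics.isLittleO_iff]
    intro ε hε
    set D : ℝ := C₂ * Real.exp (Kc * t) + 1 with hD'
    have hDpos : 0 < D := by positivity
    set ε' : ℝ := ε / D with hε''
    have hε'pos : 0 < ε' := by positivity
    obtain ⟨ρ, hρpos, hρ1, hρ⟩ := hUC ε' hε'pos
    set δ : ℝ := min δ₀ (ρ / C₂) with hδ'
    have hδpos : 0 < δ := by positivity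
    rw [Metric.eventually_nhds_iff]
    refine ⟨δ, hδpos, ?_⟩
    intro hv hhv
    set w : E := z + hv with hwdef
    have hww : w - z = hv := by rw [hwdef]; exact add_sub_cancel_left z hv
    have hw : dist w z < δ := by
      rw [dist_eq_norm, hww, ← dist_zero_right]
      exact hhv
    have hwd : dist w z ≤ δ₀ := (le_of_lt hw).trans (min_le_left _ _)
    have hwnorm : ‖w - z‖ = dist w z := (dist_eq_norm w z).symm
    have hLw : ∀ σ ∈ Icc (0:ℝ) τ₀, dist (X σ w) (γ σ) ≤ ρ := by
      intro σ hσ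
      have hmem : σ ∈ Icc (-1:ℝ) (t+1) := ⟨by linarith [hσ.1], by linarith [hσ.2.trans hτ.2]⟩
      refine (hLip w (hδ₀ w hwd) σ hmem).trans ?_
      calc dist w z * C₂ ≤ (ρ / C₂) * C₂ :=
            mul_le_mul_of_nonneg_right ((le_of_lt hw).trans (min_le_right _ _)) hC₂pos.le
        _ = ρ := div_mul_cancel₀ _ hC₂pos.ne'
    have hLw2 : ∀ σ ∈ Icc (0:ℝ) τ₀, dist (X σ w) (γ σ) ≤ dist w z * C₂ := by
      intro σ hσ
      exact hLip w (hδ₀ w hwd) σ ⟨by linarith [hσ.1], by linarith [hσ.2.trans hτ.2]⟩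
    set r : ℝ → E := fun σ => X σ w - γ σ - (M σ) (w - z) with hr'
    have hr0 : ‖r 0‖ ≤ 0 := by
      rw [hr']
      simp [hX0, hγ0, hM0]
    have hrc : ContinuousOn r (Icc 0 τ₀) := by
      apply ContinuousOn.sub
      · exact ((continuous_iff_continuousAt.2 fun σ => (hX σ w).continuousAt).sub
          hγc).continuousOn
      · exact (ContinuousLinearMap.apply ℝ E (w - z)).continuous.comp_continuousOn
          (hMc.mono (Icc_subset_Icc le_rfl hτ.2))
    have hrd : ∀ σ ∈ Ico (0:ℝ) τ₀, HasDerivWithinAt r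
        (V (X σ w) - V (γ σ) - (Acomp σ (M σ)) (w - z)) (Ici σ) σ := by
      intro σ hσ
      have h1 : HasDerivWithinAt (fun σ => X σ w - γ σ) (V (X σ w) - V (γ σ)) (Ici σ) σ :=
        ((hX σ w).sub (hX σ z)).hasDerivWithinAt
      have h2 : HasDerivWithinAt (fun σ => (M σ) (w - z)) ((Acomp σ (M σ)) (w - z))
          (Ici σ) σ := by
        have := (hMIci σ hσ).clm_apply (hasDerivWithinAt_const _ _ (w - z))
        simpa using this
      exact h1.sub h2
    have hbound : ∀ σ ∈ Ico (0:ℝ) τ₀,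
        ‖V (X σ w) - V (γ σ) - (Acomp σ (M σ)) (w - z)‖ ≤ Kc * ‖r σ‖ + ε' * (C₂ * ‖w - z‖) := by
      intro σ hσ
      have hdecomp : V (X σ w) - V (γ σ) - (Acomp σ (M σ)) (w - z) =
          A σ (r σ) + (V (X σ w) - V (γ σ) - A σ (X σ w - γ σ)) := by
        have : (Acomp σ (M σ)) (w - z) = A σ ((M σ) (w - z)) := rfl
        rw [this, hr']
        simp only [map_sub]
        abel
      rw [hdecomp]
      have hσIcc : σ ∈ Icc (0:ℝ) τ₀ := ⟨hσ.1, hσ.2.le⟩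
      have hmem : σ ∈ Icc (-1:ℝ) (t+1) := ⟨by linarith [hσ.1], by linarith [hσ.2.le.trans hτ.2]⟩
      have h1 : ‖A σ (r σ)‖ ≤ Kc * ‖r σ‖ := by
        calc ‖A σ (r σ)‖ ≤ ‖A σ‖ * ‖r σ‖ := (A σ).le_opNorm _
          _ ≤ Kc * ‖r σ‖ := mul_le_mul_of_nonneg_right (hAb σ hmem) (norm_nonneg _)
      have hsub1 : closedBall (γ σ) ρ ⊆ B :=
        (closedBall_subset_closedBall hρ1).trans (hballs σ hmem)
      have h2 : ‖V (X σ w) - V (γ σ) - A σ (X σ w - γ σ)‖ ≤ ε' * ‖X σ w - γ σ‖ := by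
        refine Convex.norm_image_sub_le_of_norm_hasFDerivWithin_le'
          (f := V) (f' := DV) (φ := A σ) (s := closedBall (γ σ) ρ)
          (fun x _ => (hVd x).hasFDerivAt.hasFDerivWithinAt) ?_
          (convex_closedBall _ _) (mem_closedBall_self hρpos.le) ?_
        · intro x hx
          exact hρ x (hsub1 hx) (γ σ) (hγmem σ hmem) (mem_closedBall.1 hx)
        · exact mem_closedBall.2 (hLw σ hσIcc)
      have h3 : ‖X σ w - γ σ‖ ≤ C₂ * ‖w - z‖ := by
        rw [← dist_eq_norm, hwnorm]
        rw [mul_comm]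
        exact hLw2 σ hσIcc
      calc ‖A σ (r σ) + (V (X σ w) - V (γ σ) - A σ (X σ w - γ σ))‖
          ≤ ‖A σ (r σ)‖ + ‖V (X σ w) - V (γ σ) - A σ (X σ w - γ σ)‖ := norm_add_le _ _
        _ ≤ Kc * ‖r σ‖ + ε' * ‖X σ w - γ σ‖ := add_le_add h1 h2
        _ ≤ Kc * ‖r σ‖ + ε' * (C₂ * ‖w - z‖) := by
            have := mul_le_mul_of_nonneg_left h3 hε'pos.le
            linarith
    have hgron := norm_le_gronwallBound_of_norm_deriv_right_le (δ := 0) (K := Kc)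
      (ε := ε' * (C₂ * ‖w - z‖)) (a := 0) (b := τ₀) hrc hrd hr0 hbound τ₀
      (right_mem_Icc.2 hτ.1)
    rw [gronwallBound_of_K_ne_0 hKcpos.ne'] at hgron
    simp only [zero_mul, zero_add] at hgron
    have hfinal : ‖r τ₀‖ ≤ ε * ‖w - z‖ := by
      have he1 : Real.exp (Kc * (τ₀ - 0)) ≤ Real.exp (Kc * t) :=
        Real.exp_le_exp.2 (mul_le_mul_of_nonneg_left (by linarith [hτ.2]) hKcpos.le)
      have he2 : (1:ℝ) ≤ Real.exp (Kc * (τ₀ - 0)) :=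
        Real.one_le_exp (by nlinarith [hτ.1])
      have hgr2 : ‖r τ₀‖ ≤ ε' * (C₂ * ‖w - z‖) * Real.exp (Kc * t) := by
        have hKinv : ε' * (C₂ * ‖w - z‖) / Kc ≤ ε' * (C₂ * ‖w - z‖) := by
          rw [div_le_iff₀ hKcpos]
          nlinarith [mul_nonneg (mul_nonneg hε'pos.le hC₂pos.le) (norm_nonneg (w - z)),
            mul_nonneg hε'pos.le (mul_nonneg hC₂pos.le (norm_nonneg (w - z)))]
        calc ‖r τ₀‖ ≤
              ε' * (C₂ * ‖w - z‖) / Kc * (Real.exp (Kc * (τ₀ - 0)) - 1) := hgron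
          _ ≤ ε' * (C₂ * ‖w - z‖) * (Real.exp (Kc * (τ₀ - 0)) - 1) := by
              refine mul_le_mul_of_nonneg_right hKinv (by linarith)
          _ ≤ ε' * (C₂ * ‖w - z‖) * Real.exp (Kc * t) := by
              refine mul_le_mul_of_nonneg_left (by linarith)
                (mul_nonneg hε'pos.le (mul_nonneg hC₂pos.le (norm_nonneg _)))
      refine hgr2.trans ?_
      rw [hε'']
      have hDle : C₂ * Real.exp (Kc * t) ≤ D := by rw [hD']; linarith
      have hεD : ε / D * C₂ * Real.exp (Kc * t) ≤ ε := by
        rw [div_mul_eq_mul_div, div_mul_eq_mul_div, div_le_iff₀ hDpos]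
        nlinarith [hε.le, norm_nonneg (w - z)]
      nlinarith [norm_nonneg (w - z), hε.le, hC₂pos.le, Real.exp_pos (Kc * t), hDpos]
    have hgoal := hfinal
    simp only [hr', hγ] at hgoal
    rw [hww] at hgoal
    exact hgoal
  -- the identity W (V z) = V (X τ₀ z)
  have hId : (M τ₀) (V z) = V (γ τ₀) := by
    have hproj : ∀ σ ∈ Icc (0:ℝ) t, max 0 (min σ t) = σ := by
      intro σ hσ
      rw [min_eq_left hσ.2, max_eq_right hσ.1]
    have hprojmem : ∀ σ : ℝ, max 0 (min σ t) ∈ Icc (-1:ℝ) (t+1) := by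
      intro σ
      constructor
      · have : (0:ℝ) ≤ max 0 (min σ t) := le_max_left _ _
        linarith
      · have : max 0 (min σ t) ≤ t := max_le ht (min_le_right _ _)
        linarith
    have hlip' : ∀ σ : ℝ, LipschitzOnWith K (fun x => A (max 0 (min σ t)) x) univ := by
      intro σ
      have hb : ‖A (max 0 (min σ t))‖₊ ≤ K := by
        rw [← NNReal.coe_le_coe, coe_nnnorm, hKcoe]
        exact hAb _ (hprojmem σ)
      exact ((A _).lipschitz.weaken hb).lipschitzOnWith
    have huniq := ODE_solution_unique_of_mem_Icc_right
      (v := fun σ x => A (max 0 (min σ t)) x) (s := fun _ => univ) (K := K)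
      (f := fun σ => (M σ) (V z)) (g := fun σ => V (γ σ)) (a := 0) (b := τ₀)
      (fun σ _ => hlip' σ)
      ((ContinuousLinearMap.apply ℝ E (V z)).continuous.comp_continuousOn
        (hMc.mono (Icc_subset_Icc le_rfl hτ.2)))
      (fun σ hσ => by
        have h := (hMIci σ hσ).clm_apply (hasDerivWithinAt_const _ _ (V z))
        have hσt : σ ∈ Icc (0:ℝ) t := ⟨hσ.1, hσ.2.le.trans hτ.2⟩
        show HasDerivWithinAt (fun σ => (M σ) (V z))
          (A (max 0 (min σ t)) ((M σ) (V z))) (Ici σ) σ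
        rw [hproj σ hσt]
        rw [map_zero, add_zero] at h
        exact h)
      (fun σ _ => mem_univ _)
      ((hVd.continuous.comp hγc).continuousOn)
      (fun σ hσ => by
        have hσt : σ ∈ Icc (0:ℝ) t := ⟨hσ.1, hσ.2.le.trans hτ.2⟩
        have h := (hVd (γ σ)).hasFDerivAt.comp_hasDerivAt σ (hX σ z)
        show HasDerivWithinAt (fun σ => V (γ σ))
          (A (max 0 (min σ t)) (V (γ σ))) (Ici σ) σ
        rw [hproj σ hσt]
        exact h.hasDerivWithinAt)
      (fun σ _ => mem_univ _)
      (by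
        show (M 0) (V z) = V (γ 0)
        rw [hM0, hγ0]
        simp)
    have := huniq (right_mem_Icc.2 hτ.1)
    simpa using this
  exact ⟨M τ₀, hW, hId, hJC⟩

noncomputable section

set_option maxHeartbeats 1000000 in
/-- Derivative of the non-autonomous composition `F(s) = X₂(t−s, X₁(s, X⁰))`:
`F′(s) = (∂X₂/∂X⁰)(t−s, X₁(s,X⁰)) · (V₁ − V₂)(X₁(s,X⁰))`. -/
theorem deriv_flow_composition
    (n : ℕ) (V₁ V₂ : (Fin n → ℝ) → (Fin n → ℝ))
    (hV₁ : ContDiff ℝ 1 V₁) (hV₂ : ContDiff ℝ 1 V₂)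
    (X₁ X₂ : ℝ → (Fin n → ℝ) → (Fin n → ℝ))
    (hX₁0 : ∀ y, X₁ 0 y = y) (hX₂0 : ∀ y, X₂ 0 y = y)
    (hX₁ : ∀ s y, HasDerivAt (fun u => X₁ u y) (V₁ (X₁ s y)) s)
    (hX₂ : ∀ s y, HasDerivAt (fun u => X₂ u y) (V₂ (X₂ s y)) s)
    (t : ℝ) (ht : 0 < t) (X0 : Fin n → ℝ) (s : ℝ) (hs : s ∈ Set.Icc 0 t) :
    HasDerivAt (fun u => X₂ (t - u) (X₁ u X0))
      ((fderiv ℝ (X₂ (t - s)) (X₁ s X0)) (V₁ (X₁ s X0) - V₂ (X₁ s X0))) s := by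
  have hτ : t - s ∈ Set.Icc (0:ℝ) t := ⟨by linarith [hs.2], by linarith [hs.1]⟩
  obtain ⟨W, hWfd, hWid, hJC⟩ := flow_key V₂ hV₂ X₂ hX₂0 hX₂ t ht.le (X₁ s X0) (t - s) hτ
  have hsecond : HasDerivAt (fun u => X₂ (t - s) (X₁ u X0)) (W (V₁ (X₁ s X0))) s := by
    have := hWfd.comp_hasDerivAt s (hX₁ s X0)
    exact this
  have hXcont : Continuous (fun u => X₁ u X0) :=
    continuous_iff_continuousAt.2 fun u => (hX₁ u X0).continuousAt
  have hφ : HasDerivAt (fun u => X₂ (t - u) (X₁ u X0) - X₂ (t - s) (X₁ u X0))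
      (-(V₂ (X₂ (t - s) (X₁ s X0)))) s := by
    rw [hasDerivAt_iff_isLittleO, Asymptotics.isLittleO_iff]
    intro ε hε
    obtain ⟨η, hηpos, hη⟩ := Metric.continuousAt_iff.1
      (hV₂.continuous.continuousAt : ContinuousAt V₂ (X₂ (t - s) (X₁ s X0))) ε hε
    obtain ⟨δ, hδpos, hδ⟩ := hJC (η/2) (half_pos hηpos)
    obtain ⟨δ₂, hδ₂pos, hδ₂⟩ := Metric.continuousAt_iff.1
      (hXcont.continuousAt : ContinuousAt (fun u => X₁ u X0) s) δ hδpos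
    rw [Metric.eventually_nhds_iff]
    refine ⟨min δ δ₂, by positivity, ?_⟩
    intro u hu
    have hud : |u - s| < min δ δ₂ := by rw [← Real.dist_eq]; exact hu
    have hw1 : ‖X₁ u X0 - X₁ s X0‖ ≤ δ := by
      rw [← dist_eq_norm]
      exact (hδ₂ (show dist u s < δ₂ from lt_of_lt_of_le hu (min_le_right _ _))).le
    set wu := X₁ u X0 with hwu
    set a : ℝ := min (t - u) (t - s) with ha
    set b : ℝ := max (t - u) (t - s) with hb
    have hab : a ≤ b := min_le_max
    have hσb : ∀ σ ∈ Icc a b, |σ - (t - s)| ≤ |u - s| := by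
      intro σ hσ
      have h1 : a ≤ t - s := min_le_right _ _
      have h2 : t - s ≤ b := le_max_right _ _
      have h3 : b - a = |u - s| := by
        rcases le_total u s with h | h
        · rw [ha, hb, min_eq_right (by linarith), max_eq_left (by linarith),
            abs_of_nonpos (by linarith)]
          ring
        · rw [ha, hb, min_eq_left (by linarith), max_eq_right (by linarith),
            abs_of_nonneg (by linarith)]
          ring
      rw [abs_le]
      constructor
      · have := hσ.1
        nlinarith [abs_nonneg (u - s)]
      · have := hσ.2
        nlinarith [abs_nonneg (u - s)]
    have hder : ∀ σ ∈ Icc a b,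
        HasDerivWithinAt (fun σ => X₂ σ wu - σ • V₂ (X₂ (t - s) (X₁ s X0)))
        (V₂ (X₂ σ wu) - V₂ (X₂ (t - s) (X₁ s X0))) (Icc a b) σ := by
      intro σ _
      have h2 : HasDerivAt (fun σ : ℝ => σ • V₂ (X₂ (t - s) (X₁ s X0)))
          (V₂ (X₂ (t - s) (X₁ s X0))) σ := by
        simpa using (hasDerivAt_id σ).smul_const (V₂ (X₂ (t - s) (X₁ s X0)))
      exact ((hX₂ σ wu).sub h2).hasDerivWithinAt
    have hbnd : ∀ σ ∈ Ico a b, ‖V₂ (X₂ σ wu) - V₂ (X₂ (t - s) (X₁ s X0))‖ ≤ ε := by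
      intro σ hσ
      have h3 : ‖X₂ σ wu - X₂ (t - s) (X₁ s X0)‖ ≤ η/2 :=
        hδ σ wu ((hσb σ ⟨hσ.1, hσ.2.le⟩).trans
          (le_of_lt (lt_of_lt_of_le hud (min_le_left _ _)))) hw1
      have h4 := hη (x := X₂ σ wu) (by rw [dist_eq_norm]; linarith)
      rw [dist_eq_norm] at h4
      exact h4.le
    have hmvt := norm_image_sub_le_of_norm_deriv_le_segment' hder hbnd b (right_mem_Icc.2 hab)
    show ‖(X₂ (t - u) (X₁ u X0) - X₂ (t - s) (X₁ u X0)) -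
        (X₂ (t - s) (X₁ s X0) - X₂ (t - s) (X₁ s X0)) -
        (u - s) • (-(V₂ (X₂ (t - s) (X₁ s X0))))‖ ≤ ε * ‖u - s‖
    rw [sub_self, sub_zero, smul_neg, sub_neg_eq_add]
    have hba : ε * (b - a) = ε * ‖u - s‖ := by
      congr 1
      rw [Real.norm_eq_abs]
      rcases le_total u s with h | h
      · rw [ha, hb, min_eq_right (by linarith), max_eq_left (by linarith),
          abs_of_nonpos (by linarith)]
        ring
      · rw [ha, hb, min_eq_left (by linarith), max_eq_right (by linarith),
          abs_of_nonneg (by linarith)]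
        ring
    rcases le_total u s with h | h
    · have ha' : a = t - s := min_eq_right (by linarith)
      have hb' : b = t - u := max_eq_left (by linarith)
      have he : X₂ (t - u) wu - X₂ (t - s) wu + (u - s) • V₂ (X₂ (t - s) (X₁ s X0)) =
          (X₂ b wu - b • V₂ (X₂ (t - s) (X₁ s X0))) -
          (X₂ a wu - a • V₂ (X₂ (t - s) (X₁ s X0))) := by
        have e2 : (u - s) • V₂ (X₂ (t - s) (X₁ s X0)) =
            (t - s) • V₂ (X₂ (t - s) (X₁ s X0)) - (t - u) • V₂ (X₂ (t - s) (X₁ s X0)) := by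
          rw [← sub_smul]
          congr 1
          ring
        rw [ha', hb', e2]
        abel
      rw [← hba, he]
      exact hmvt
    · have ha' : a = t - u := min_eq_left (by linarith)
      have hb' : b = t - s := max_eq_right (by linarith)
      have he : X₂ (t - u) wu - X₂ (t - s) wu + (u - s) • V₂ (X₂ (t - s) (X₁ s X0)) =
          -((X₂ b wu - b • V₂ (X₂ (t - s) (X₁ s X0))) -
          (X₂ a wu - a • V₂ (X₂ (t - s) (X₁ s X0)))) := by
        have e2 : (u - s) • V₂ (X₂ (t - s) (X₁ s X0)) =
            (t - s) • V₂ (X₂ (t - s) (X₁ s X0)) - (t - u) • V₂ (X₂ (t - s) (X₁ s X0)) := by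
          rw [← sub_smul]
          congr 1
          ring
        rw [ha', hb', e2]
        abel
      rw [← hba, he, norm_neg]
      exact hmvt
  have hsum := hφ.add hsecond
  have hfun : (fun u => (X₂ (t - u) (X₁ u X0) - X₂ (t - s) (X₁ u X0)) +
      X₂ (t - s) (X₁ u X0)) = fun u => X₂ (t - u) (X₁ u X0) := by
    funext u
    abel
  rw [show ((fun u => X₂ (t - u) (X₁ u X0) - X₂ (t - s) (X₁ u X0)) +
    fun u => X₂ (t - s) (X₁ u X0)) = fun u => X₂ (t - u) (X₁ u X0) from hfun] at hsum
  have hval : (fderiv ℝ (X₂ (t - s)) (X₁ s X0)) (V₁ (X₁ s X0) - V₂ (X₁ s X0)) =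
      -(V₂ (X₂ (t - s) (X₁ s X0))) + W (V₁ (X₁ s X0)) := by
    rw [hWfd.fderiv, map_sub, hWid]
    abel
  rw [hval]
  exact hsum
end
end

section
/- (Uniqueness for the linearized dipole inverse problem) Let m̃ : ℝ² → ℝ² be continuous with compact support contained in a bounded open set Ω ⊂ B_{ρ/2π}, and suppose m̃ = (1/2)∇q̃ for some C¹ function q̃. If for all unit vectors ξ₀ and all z ∈ ℝ with x_e(s) = z ξ₀⊥ − (ρ/2π)ξ₀ + (s/2π)ξ₀, the linearized identity ∫_ℝ [I₂, (τ−s)E(ξ₀); 0, I₂] · (m̃⊥(x_e+ξ₀⊥) − m̃⊥(x_e−ξ₀⊥), m̃(x_e+ξ₀⊥) + m̃(x_e−ξ₀⊥))ᵀ ds = 0 holds, then m̃ ≡ 0. -/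
open Real MeasureTheory

noncomputable section

def perp (u : ℝ × ℝ) : ℝ × ℝ := (u.2, -u.1)

def nsq (u : ℝ × ℝ) : ℝ := u.1 ^ 2 + u.2 ^ 2

def dot (u v : ℝ × ℝ) : ℝ := u.1 * v.1 + u.2 * v.2

def grad (f : ℝ × ℝ → ℝ) (x : ℝ × ℝ) : ℝ × ℝ :=
  (fderiv ℝ f x (1, 0), fderiv ℝ f x (0, 1))

/-- The matrix `E(ξ) = (1/2π)[I₂/|ξ|² − 2 ξ⊗ξ/|ξ|⁴]`, acting on vectors.
For unit `ξ` this is `(1/2π)[I₂ − 2ξ⊗ξ]`. -/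
def Emat (ξ v : ℝ × ℝ) : ℝ × ℝ :=
  (1 / (2 * π)) • ((nsq ξ)⁻¹ • v - (2 * dot ξ v / (nsq ξ) ^ 2) • ξ)

open FourierTransform

def rotL (ξ : ℝ × ℝ) : (ℝ × ℝ) →ₗ[ℝ] (ℝ × ℝ) :=
  Matrix.toLin (Module.Basis.finTwoProd ℝ) (Module.Basis.finTwoProd ℝ) !![ξ.2, ξ.1; -ξ.1, ξ.2]

lemma rotL_apply (ξ p : ℝ × ℝ) : rotL ξ p = p.1 • perp ξ + p.2 • ξ := by
  simp [rotL, Matrix.toLin_finTwoProd_apply, perp, Prod.ext_iff]; constructor <;> ring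

lemma rotL_det (ξ : ℝ × ℝ) (hξ : nsq ξ = 1) : LinearMap.det (rotL ξ) = 1 := by
  have h : ξ.1 ^ 2 + ξ.2 ^ 2 = 1 := hξ
  rw [rotL, LinearMap.det_toLin, Matrix.det_fin_two_of]; ring_nf; linarith [h]

lemma rotL_measurePreserving (ξ : ℝ × ℝ) (hξ : nsq ξ = 1) :
    MeasurePreserving (rotL ξ) volume volume := by
  refine ⟨(LinearMap.continuous_of_finiteDimensional _).measurable, ?_⟩
  rw [Measure.map_linearMap_addHaar_eq_smul_addHaar volume (by rw [rotL_det ξ hξ]; norm_num),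
    rotL_det ξ hξ]
  norm_num

def rotE (ξ : ℝ × ℝ) (hξ : nsq ξ = 1) : (ℝ × ℝ) ≃L[ℝ] (ℝ × ℝ) :=
  LinearEquiv.toContinuousLinearEquiv
    (LinearEquiv.ofIsUnitDet (v := Module.Basis.finTwoProd ℝ) (v' := Module.Basis.finTwoProd ℝ)
      (f := rotL ξ) (by rw [LinearMap.det_toMatrix, rotL_det ξ hξ]; exact isUnit_one))

lemma rot_integral {E : Type*} [NormedAddCommGroup E] [NormedSpace ℝ E]
    (ξ : ℝ × ℝ) (hξ : nsq ξ = 1) (F : ℝ × ℝ → E) :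
    ∫ p : ℝ × ℝ, F (p.1 • perp ξ + p.2 • ξ) = ∫ x, F x := by
  have h := (rotL_measurePreserving ξ hξ).integral_comp
    ((rotE ξ hξ).toHomeomorph.measurableEmbedding) F
  simpa only [rotL_apply] using h

/-- The character `t ↦ exp (-2πit)`. -/
def efn (t : ℝ) : ℂ := Complex.exp ((↑(-2 * π * t) : ℂ) * Complex.I)

lemma efn_add (u v : ℝ) : efn (u + v) = efn u * efn v := by
  rw [efn, efn, efn, ← Complex.exp_add]; congr 1; push_cast; ring

lemma efn_norm (t : ℝ) : ‖efn t‖ = 1 := by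
  rw [efn]; exact Complex.norm_exp_ofReal_mul_I _

lemma efn_continuous : Continuous efn := by
  unfold efn; fun_prop

lemma line_hasCompactSupport {E : Type*} [NormedAddCommGroup E] {f : ℝ × ℝ → E}
    (hfs : HasCompactSupport f) (c ξ : ℝ × ℝ) (hξ : ξ ≠ 0) :
    HasCompactSupport fun s : ℝ => f (c + s • ξ) := by
  obtain ⟨A, hA⟩ : ∃ A, tsupport f ⊆ Metric.closedBall 0 A :=
    hfs.isBounded.subset_closedBall 0
  have hξn : 0 < ‖ξ‖ := norm_pos_iff.2 hξ
  refine HasCompactSupport.intro (isCompact_Icc (a := -((A + ‖c‖) / ‖ξ‖))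
    (b := (A + ‖c‖) / ‖ξ‖)) ?_
  intro s hs
  apply image_eq_zero_of_notMem_tsupport
  intro hmem
  have h1 : ‖c + s • ξ‖ ≤ A := by
    simpa [Metric.mem_closedBall, dist_eq_norm] using hA hmem
  have h2 : |s| * ‖ξ‖ ≤ A + ‖c‖ := by
    have h3 : ‖s • ξ‖ ≤ ‖c + s • ξ‖ + ‖c‖ := by
      calc ‖s • ξ‖ = ‖(c + s • ξ) - c‖ := by congr 1; abel
        _ ≤ ‖c + s • ξ‖ + ‖c‖ := norm_sub_le _ _
    have h4 : ‖s • ξ‖ = |s| * ‖ξ‖ := by rw [norm_smul, Real.norm_eq_abs]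
    rw [h4] at h3; linarith
  have h4 : |s| ≤ (A + ‖c‖) / ‖ξ‖ := by rw [le_div_iff₀ hξn]; exact h2
  rcases abs_le.1 h4 with ⟨h5, h6⟩
  exact hs ⟨h5, h6⟩

lemma line_integrable {E : Type*} [NormedAddCommGroup E] {f : ℝ × ℝ → E}
    (hf : Continuous f) (hfs : HasCompactSupport f) (c ξ : ℝ × ℝ) (hξ : ξ ≠ 0) :
    Integrable fun s : ℝ => f (c + s • ξ) :=
  (hf.comp (by fun_prop)).integrable_of_hasCompactSupport
    (line_hasCompactSupport hfs c ξ hξ)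

lemma fourier_vanish_1d (h : ℝ → ℂ) (hc : Continuous h) (hcs : HasCompactSupport h)
    (hz : ∀ a : ℝ, (∫ t : ℝ, efn (t * a) * h t) = 0) : ∀ t, h t = 0 := by
  have hF : 𝓕 h = 0 := by
    funext a
    have : 𝓕 h a = ∫ t : ℝ, efn (t * a) * h t := by
      rw [Real.fourier_eq']
      congr 1
      funext t
      rw [efn, smul_eq_mul, Real.inner_apply]
    rw [this, hz a]
    rfl
  have hinv : 𝓕⁻ (𝓕 h) = h :=
    hc.fourierInv_fourier_eq (hc.integrable_of_hasCompactSupport hcs)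
      (by rw [hF]; exact integrable_zero _ _ _)
  rw [hF] at hinv
  have h0 : 𝓕⁻ (0 : ℝ → ℂ) = 0 := by
    funext w; rw [Real.fourierInv_eq]; simp
  rw [h0] at hinv
  intro t; exact (congrFun hinv t).symm

lemma xray_zero (g : ℝ × ℝ → ℝ) (hg : Continuous g) (hgs : HasCompactSupport g)
    (h : ∀ ξ : ℝ × ℝ, nsq ξ = 1 → ∀ z : ℝ, (∫ s : ℝ, g (z • perp ξ + s • ξ)) = 0) :
    ∀ x, g x = 0 := by
  set G : ℝ × ℝ → ℂ := fun x => (g x : ℂ) with hGdef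
  have hGc : Continuous G := Complex.continuous_ofReal.comp hg
  have hGs : HasCompactSupport G := hgs.comp_left (g := Complex.ofReal) Complex.ofReal_zero
  -- line integrals of `G` vanish
  have hline : ∀ ξ : ℝ × ℝ, nsq ξ = 1 → ∀ z : ℝ,
      (∫ s : ℝ, G (z • perp ξ + s • ξ)) = 0 := by
    intro ξ hξ z
    have : (∫ s : ℝ, G (z • perp ξ + s • ξ))
        = ((∫ s : ℝ, g (z • perp ξ + s • ξ) : ℝ) : ℂ) := integral_ofReal
    rw [this, h ξ hξ z]; exact Complex.ofReal_zero
  -- the 2D Fourier-type integrals vanish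
  have hA : ∀ w : ℝ × ℝ, (∫ x : ℝ × ℝ, efn (dot x w) * G x) = 0 := by
    intro w
    obtain ⟨ξ, r, hξ, hdot⟩ : ∃ (ξ : ℝ × ℝ) (r : ℝ), nsq ξ = 1 ∧
        ∀ z s : ℝ, dot (z • perp ξ + s • ξ) w = z * r := by
      rcases eq_or_ne w 0 with h0 | h0
      · refine ⟨(1, 0), 0, by norm_num [nsq], fun z s => by simp [h0, dot]⟩
      · have hnw : 0 < nsq w := by
          have h1 : w.1 ≠ 0 ∨ w.2 ≠ 0 := by
            by_contra hcon
            push_neg at hcon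
            exact h0 (Prod.ext hcon.1 hcon.2)
          show 0 < w.1 ^ 2 + w.2 ^ 2
          rcases h1 with h1 | h1
          · nlinarith [sq_nonneg w.2, mul_self_pos.2 h1]
          · nlinarith [sq_nonneg w.1, mul_self_pos.2 h1]
        set r := Real.sqrt (nsq w) with hrdef
        have hr : 0 < r := Real.sqrt_pos.2 hnw
        have hr2 : r ^ 2 = nsq w := Real.sq_sqrt (le_of_lt hnw)
        refine ⟨(-w.2 / r, w.1 / r), r, ?_, ?_⟩
        · show (-w.2 / r) ^ 2 + (w.1 / r) ^ 2 = 1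
          have hnsq : w.1 ^ 2 + w.2 ^ 2 = r ^ 2 := by rw [hr2]; rfl
          field_simp
          linarith [hnsq]
        · intro z s
          simp only [dot, perp, Prod.smul_mk, smul_eq_mul, Prod.mk_add_mk, Prod.fst, Prod.snd]
          have hnsq : w.1 ^ 2 + w.2 ^ 2 = r ^ 2 := by rw [hr2]; rfl
          field_simp
          linear_combination z * hnsq
    have hrot := rot_integral ξ hξ (fun x => efn (dot x w) * G x)
    rw [← hrot]
    have heq : (fun p : ℝ × ℝ => efn (dot (p.1 • perp ξ + p.2 • ξ) w) * G (p.1 • perp ξ + p.2 • ξ))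
        = fun p : ℝ × ℝ => efn (p.1 * r) * G (p.1 • perp ξ + p.2 • ξ) := by
      funext p; rw [hdot]
    show (∫ p : ℝ × ℝ, efn (dot (p.1 • perp ξ + p.2 • ξ) w) * G (p.1 • perp ξ + p.2 • ξ)) = 0
    rw [show (fun p : ℝ × ℝ => efn (dot (p.1 • perp ξ + p.2 • ξ) w) * G (p.1 • perp ξ + p.2 • ξ)) = _ from heq]
    have hint : Integrable (fun p : ℝ × ℝ => efn (p.1 * r) * G (p.1 • perp ξ + p.2 • ξ)) := by
      apply Continuous.integrable_of_hasCompactSupport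
      · exact (efn_continuous.comp (by fun_prop)).mul (hGc.comp (by fun_prop))
      · have hc2 : HasCompactSupport (G ∘ (rotE ξ hξ).toHomeomorph) :=
          hGs.comp_homeomorph _
        have heq2 : (fun p : ℝ × ℝ => efn (p.1 * r) * G (p.1 • perp ξ + p.2 • ξ))
            = (fun p : ℝ × ℝ => efn (p.1 * r)) * (G ∘ (rotE ξ hξ).toHomeomorph) := by
          funext p
          simp only [Pi.mul_apply, Function.comp_apply]
          congr 2
          exact (rotL_apply ξ p).symm
        rw [heq2]
        exact hc2.mul_left
    rw [Measure.volume_eq_prod] at hint ⊢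
    rw [MeasureTheory.integral_prod _ hint]
    have hz : ∀ z : ℝ, (∫ s : ℝ, efn (z * r) * G (z • perp ξ + s • ξ)) = 0 := by
      intro z
      rw [integral_const_mul, hline ξ hξ z, mul_zero]
    simp only [hz]
    exact integral_zero _ _
  -- bound and support data
  obtain ⟨A₀, hA₀⟩ : ∃ A, tsupport G ⊆ Metric.closedBall 0 A :=
    hGs.isBounded.subset_closedBall 0
  set A := max A₀ 0 with hAdef
  have hGsupp : ∀ x : ℝ × ℝ, A < ‖x‖ → G x = 0 := by
    intro x hx
    apply image_eq_zero_of_notMem_tsupport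
    intro hmem
    have h1 := hA₀ hmem
    rw [Metric.mem_closedBall, dist_zero_right] at h1
    have h2 : ‖x‖ ≤ A := le_trans h1 (le_max_left _ _)
    linarith
  have hG1 : ∀ x : ℝ × ℝ, A < |x.1| → G x = 0 := by
    intro x hx
    refine hGsupp x (lt_of_lt_of_le hx ?_)
    rw [← Real.norm_eq_abs]
    exact norm_fst_le x
  have hG2 : ∀ x : ℝ × ℝ, A < |x.2| → G x = 0 := by
    intro x hx
    refine hGsupp x (lt_of_lt_of_le hx ?_)
    rw [← Real.norm_eq_abs]
    exact norm_snd_le x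
  obtain ⟨C, hC⟩ : ∃ C, ∀ x, ‖G x‖ ≤ C := hGs.exists_bound_of_continuous hGc
  set H : ℝ → ℝ → ℂ := fun b x₁ => ∫ x₂ : ℝ, efn (x₂ * b) * G (x₁, x₂) with hHdef
  have hHcont : ∀ b, Continuous (H b) := by
    intro b
    apply continuous_of_dominated (bound := Set.indicator (Set.Icc (-A) A) fun _ => C)
    · intro x₁
      exact ((efn_continuous.comp (by fun_prop)).mul
        (hGc.comp (by fun_prop))).aestronglyMeasurable
    · intro x₁
      filter_upwards with x₂
      rw [norm_mul, efn_norm, one_mul]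
      by_cases hx₂ : x₂ ∈ Set.Icc (-A) A
      · rw [Set.indicator_of_mem hx₂]; exact hC _
      · rw [Set.indicator_of_notMem hx₂]
        have hgt : A < |x₂| := by
          by_contra hle
          push_neg at hle
          exact hx₂ (Set.mem_Icc.2 (abs_le.1 hle))
        rw [hG2 (x₁, x₂) hgt]
        simp
    · exact (MeasureTheory.integrableOn_const
        measure_Icc_lt_top.ne).integrable_indicator measurableSet_Icc
    · filter_upwards with x₂
      exact continuous_const.mul (hGc.comp (by fun_prop))
  have hHsupp : ∀ b, HasCompactSupport (H b) := by
    intro b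
    refine HasCompactSupport.intro (isCompact_Icc (a := -A) (b := A)) ?_
    intro x₁ hx₁
    have hgt : A < |x₁| := by
      by_contra hle
      push_neg at hle
      exact hx₁ (Set.mem_Icc.2 (abs_le.1 hle))
    have hzero : ∀ x₂ : ℝ, efn (x₂ * b) * G (x₁, x₂) = 0 := fun x₂ => by
      rw [hG1 (x₁, x₂) hgt, mul_zero]
    show (∫ x₂ : ℝ, efn (x₂ * b) * G (x₁, x₂)) = 0
    simp only [hzero, integral_zero]
  have hB : ∀ a b : ℝ, (∫ x₁ : ℝ, efn (x₁ * a) * H b x₁) = 0 := by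
    intro a b
    have h1 := hA (a, b)
    have hint2 : Integrable (fun x : ℝ × ℝ => efn (dot x (a, b)) * G x) := by
      apply Continuous.integrable_of_hasCompactSupport
      · refine (efn_continuous.comp ?_).mul hGc
        simp only [dot]
        fun_prop
      · have heq3 : (fun x : ℝ × ℝ => efn (dot x (a, b)) * G x)
            = (fun x : ℝ × ℝ => efn (dot x (a, b))) * G := rfl
        rw [heq3]
        exact hGs.mul_left
    rw [Measure.volume_eq_prod] at h1 hint2
    rw [MeasureTheory.integral_prod _ hint2] at h1
    rw [← h1]
    congr 1
    funext x₁
    rw [show H b x₁ = ∫ x₂ : ℝ, efn (x₂ * b) * G (x₁, x₂) from rfl, ← integral_const_mul]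
    congr 1
    funext x₂
    rw [← mul_assoc, ← efn_add]
    rfl
  have hH0 : ∀ b x₁, H b x₁ = 0 := fun b =>
    fourier_vanish_1d (H b) (hHcont b) (hHsupp b) (fun a => hB a b)
  intro x
  have hslice : ∀ x₂, G (x.1, x₂) = 0 := by
    apply fourier_vanish_1d (fun x₂ => G (x.1, x₂))
    · exact hGc.comp (by fun_prop)
    · refine HasCompactSupport.intro (isCompact_Icc (a := -A) (b := A)) ?_
      intro x₂ hx₂
      have hgt : A < |x₂| := by
        by_contra hle
        push_neg at hle
        exact hx₂ (Set.mem_Icc.2 (abs_le.1 hle))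
      exact hG2 (x.1, x₂) hgt
    · intro b; exact hH0 b x.1
  have hfin := hslice x.2
  rw [show ((x.1, x.2) : ℝ × ℝ) = x from rfl] at hfin
  rw [hGdef] at hfin
  simp only [Complex.ofReal_eq_zero] at hfin
  exact hfin

/-- Uniqueness for the linearized dipole inverse problem: if the linearized
Stefanov–Uhlmann identity holds for all unit directions `ξ₀` and all offsets `z`,
then the gradient-type perturbation `m̃` vanishes. -/
theorem linearized_uniqueness
    (ρ τ : ℝ) (hρ : 0 < ρ) (hτ : 0 < τ)
    (Ω : Set (ℝ × ℝ)) (hΩo : IsOpen Ω) (hΩb : Bornology.IsBounded Ω)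
    (hΩc : closure Ω ⊆ {x : ℝ × ℝ | Real.sqrt (nsq x) < ρ / (2 * π)})
    (m : ℝ × ℝ → ℝ × ℝ) (hmcont : Continuous m) (hsupp : tsupport m ⊆ Ω)
    (qt : ℝ × ℝ → ℝ) (hqt : ContDiff ℝ 1 qt)
    (hmq : ∀ x, m x = (1 / 2 : ℝ) • grad qt x)
    (hint : ∀ ξ₀ : ℝ × ℝ, nsq ξ₀ = 1 → ∀ z : ℝ,
      (∫ s : ℝ,
        (fun xe =>
          ((perp (m (xe + perp ξ₀)) - perp (m (xe - perp ξ₀)))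
              + (τ - s) • Emat ξ₀ (m (xe + perp ξ₀) + m (xe - perp ξ₀)),
            m (xe + perp ξ₀) + m (xe - perp ξ₀)))
          (z • perp ξ₀ - (ρ / (2 * π)) • ξ₀ + (s / (2 * π)) • ξ₀))
        = (0 : (ℝ × ℝ) × (ℝ × ℝ))) :
    ∀ x, m x = 0 := by
  have hπ : (0 : ℝ) < 2 * π := by positivity
  set R := ρ / (2 * π) with hRdef
  have hR : 0 < R := div_pos hρ hπ
  have hmcs : HasCompactSupport m :=
    Metric.isCompact_of_isClosed_isBounded (isClosed_tsupport m) (hΩb.subset hsupp)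
  have hm0 : ∀ y : ℝ × ℝ, R ≤ Real.sqrt (nsq y) → m y = 0 := by
    intro y hy
    apply image_eq_zero_of_notMem_tsupport
    intro hmem
    have h2 := hΩc (subset_closure (hsupp hmem))
    simp only [Set.mem_setOf_eq] at h2
    linarith
  have hframe : ∀ ξ : ℝ × ℝ, nsq ξ = 1 → ∀ z s : ℝ,
      nsq (z • perp ξ + s • ξ) = z ^ 2 + s ^ 2 := by
    intro ξ hξ z s
    have h1 : ξ.1 ^ 2 + ξ.2 ^ 2 = 1 := hξ
    show (z * ξ.2 + s * ξ.1) ^ 2 + (z * -ξ.1 + s * ξ.2) ^ 2 = z ^ 2 + s ^ 2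
    linear_combination (z ^ 2 + s ^ 2) * h1
  set L : (ℝ × ℝ) → ℝ → ℝ × ℝ := fun ξ z => ∫ s : ℝ, m (z • perp ξ + s • ξ) with hLdef
  have hLvanish : ∀ ξ, nsq ξ = 1 → ∀ z : ℝ, R ≤ |z| → L ξ z = 0 := by
    intro ξ hξ z hz
    have hzero : ∀ s : ℝ, m (z • perp ξ + s • ξ) = 0 := by
      intro s
      apply hm0
      rw [hframe ξ hξ z s]
      calc R ≤ |z| := hz
        _ = Real.sqrt (z ^ 2) := (Real.sqrt_sq_eq_abs z).symm
        _ ≤ Real.sqrt (z ^ 2 + s ^ 2) := Real.sqrt_le_sqrt (by nlinarith [sq_nonneg s])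
    show (∫ s : ℝ, m (z • perp ξ + s • ξ)) = 0
    simp only [hzero, integral_zero]
  -- the key relation from the linearized identity
  have hrel : ∀ ξ, nsq ξ = 1 → ∀ z : ℝ, L ξ (z + 1) + L ξ (z - 1) = 0 := by
    intro ξ hξ z
    have hξ0 : ξ ≠ 0 := by
      intro hc
      rw [hc] at hξ
      norm_num [nsq] at hξ
    set ξ' : ℝ × ℝ := (2 * π)⁻¹ • ξ with hξ'def
    have hξ'0 : ξ' ≠ 0 := smul_ne_zero (inv_ne_zero (ne_of_gt hπ)) hξ0
    set cp : ℝ × ℝ := (z + 1) • perp ξ - R • ξ with hcpdef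
    set cm : ℝ × ℝ := (z - 1) • perp ξ - R • ξ with hcmdef
    set F₁ : ℝ → ℝ × ℝ := fun s => m (cp + s • ξ') with hF₁def
    set F₂ : ℝ → ℝ × ℝ := fun s => m (cm + s • ξ') with hF₂def
    have hargp : ∀ s : ℝ, (z • perp ξ - R • ξ + (s / (2 * π)) • ξ) + perp ξ = cp + s • ξ' := by
      intro s
      rw [hcpdef, hξ'def, smul_smul, div_eq_mul_inv]
      module
    have hargm : ∀ s : ℝ, (z • perp ξ - R • ξ + (s / (2 * π)) • ξ) - perp ξ = cm + s • ξ' := by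
      intro s
      rw [hcmdef, hξ'def, smul_smul, div_eq_mul_inv]
      module
    have hF₁c : Continuous F₁ := hmcont.comp (by fun_prop)
    have hF₂c : Continuous F₂ := hmcont.comp (by fun_prop)
    have hF₁s : HasCompactSupport F₁ := line_hasCompactSupport hmcs cp ξ' hξ'0
    have hF₂s : HasCompactSupport F₂ := line_hasCompactSupport hmcs cm ξ' hξ'0
    have hF₁i : Integrable F₁ := line_integrable hmcont hmcs cp ξ' hξ'0
    have hF₂i : Integrable F₂ := line_integrable hmcont hmcs cm ξ' hξ'0
    set P : ℝ → (ℝ × ℝ) × (ℝ × ℝ) := fun s =>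
      ((perp (F₁ s) - perp (F₂ s)) + (τ - s) • Emat ξ (F₁ s + F₂ s), F₁ s + F₂ s) with hPdef
    have keyP : (∫ s : ℝ, P s) = 0 := by
      rw [← hint ξ hξ z]
      congr 1
      funext s
      rw [hPdef, hF₁def, hF₂def]
      simp only []
      rw [hargp s, hargm s]
    have hperpc : Continuous perp := by unfold perp; fun_prop
    have hEc : Continuous (Emat ξ) := by unfold Emat dot nsq; fun_prop
    have hPc : Continuous P := by
      refine Continuous.prodMk ?_ (hF₁c.add hF₂c)
      exact ((hperpc.comp hF₁c).sub (hperpc.comp hF₂c)).add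
        ((continuous_const.sub continuous_id).smul (hEc.comp (hF₁c.add hF₂c)))
    have hPs : HasCompactSupport P := by
      refine HasCompactSupport.intro (hF₁s.union hF₂s) ?_
      intro s hs
      rw [Set.mem_union] at hs
      push_neg at hs
      have h1 : F₁ s = 0 := image_eq_zero_of_notMem_tsupport hs.1
      have h2 : F₂ s = 0 := image_eq_zero_of_notMem_tsupport hs.2
      rw [hPdef]
      simp only [h1, h2]
      norm_num [perp, Emat, dot, Prod.ext_iff]
    have hPi : Integrable P := hPc.integrable_of_hasCompactSupport hPs
    have h2 : (∫ s : ℝ, (F₁ s + F₂ s)) = 0 := by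
      have hcomm := (ContinuousLinearMap.snd ℝ (ℝ × ℝ) (ℝ × ℝ)).integral_comp_comm hPi
      rw [keyP] at hcomm
      simpa using hcomm
    rw [integral_add hF₁i hF₂i] at h2
    -- reparametrize the two integrals
    have hrepa : ∀ (z' : ℝ), (∫ s : ℝ, m ((z' • perp ξ - R • ξ) + s • ξ')) = (2 * π) • L ξ z' := by
      intro z'
      set u : ℝ → ℝ × ℝ := fun t => m (z' • perp ξ + t • ξ) with hudef
      have harg : ∀ s : ℝ, (z' • perp ξ - R • ξ) + s • ξ' = z' • perp ξ + ((2 * π)⁻¹ * s - R) • ξ := by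
        intro s
        rw [hξ'def, smul_smul]
        module
      have step1 : (∫ s : ℝ, m ((z' • perp ξ - R • ξ) + s • ξ'))
          = ∫ s : ℝ, (fun t : ℝ => u (t - R)) ((2 * π)⁻¹ * s) := by
        congr 1
        funext s
        rw [harg s, hudef]
      rw [step1, Measure.integral_comp_mul_left (fun t : ℝ => u (t - R)) ((2 * π)⁻¹),
        integral_sub_right_eq_self u R, inv_inv, abs_of_pos hπ]
    have e1 : (∫ s : ℝ, F₁ s) = (2 * π) • L ξ (z + 1) := hrepa (z + 1)
    have e2 : (∫ s : ℝ, F₂ s) = (2 * π) • L ξ (z - 1) := hrepa (z - 1)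
    rw [e1, e2, ← smul_add] at h2
    rcases smul_eq_zero.1 h2 with hc | hc
    · exact absurd hc (ne_of_gt hπ)
    · exact hc
  have hstep : ∀ ξ, nsq ξ = 1 → ∀ z : ℝ, L ξ z = -L ξ (z + 2) := by
    intro ξ hξ z
    have h := hrel ξ hξ (z + 1)
    rw [show z + 1 + 1 = z + 2 by ring, show z + 1 - 1 = z by ring] at h
    exact eq_neg_of_add_eq_zero_left (by rw [add_comm]; exact h)
  have hLzero : ∀ ξ, nsq ξ = 1 → ∀ (n : ℕ) (z : ℝ), R ≤ z + 2 * n → L ξ z = 0 := by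
    intro ξ hξ n
    induction n with
    | zero =>
      intro z hz
      norm_num at hz
      exact hLvanish ξ hξ z (le_trans hz (le_abs_self z))
    | succ k ih =>
      intro z hz
      have h1 : L ξ (z + 2) = 0 := ih (z + 2) (by push_cast at hz ⊢; linarith)
      rw [hstep ξ hξ z, h1, neg_zero]
  have hLall : ∀ ξ, nsq ξ = 1 → ∀ z, L ξ z = 0 := by
    intro ξ hξ z
    obtain ⟨n, hn⟩ := exists_nat_ge ((R - z) / 2)
    exact hLzero ξ hξ n z (by linarith)
  -- componentwise vanishing via the X-ray lemma
  have hxray : ∀ ξ, nsq ξ = 1 → ∀ z : ℝ,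
      Integrable (fun s : ℝ => m (z • perp ξ + s • ξ)) := by
    intro ξ hξ z
    apply line_integrable hmcont hmcs
    intro hc
    rw [hc] at hξ
    norm_num [nsq] at hξ
  have hcs1 : HasCompactSupport fun y => (m y).1 := by
    refine HasCompactSupport.intro hmcs ?_
    intro y hy
    rw [image_eq_zero_of_notMem_tsupport hy]
    rfl
  have hcs2 : HasCompactSupport fun y => (m y).2 := by
    refine HasCompactSupport.intro hmcs ?_
    intro y hy
    rw [image_eq_zero_of_notMem_tsupport hy]
    rfl
  have hg1 : ∀ y, (m y).1 = 0 := by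
    apply xray_zero _ (continuous_fst.comp hmcont) hcs1
    intro ξ hξ z
    have hcomm := (ContinuousLinearMap.fst ℝ ℝ ℝ).integral_comp_comm (hxray ξ hξ z)
    rw [show (∫ s : ℝ, m (z • perp ξ + s • ξ)) = L ξ z from rfl, hLall ξ hξ z] at hcomm
    simpa using hcomm
  have hg2 : ∀ y, (m y).2 = 0 := by
    apply xray_zero _ (continuous_snd.comp hmcont) hcs2
    intro ξ hξ z
    have hcomm := (ContinuousLinearMap.snd ℝ ℝ ℝ).integral_comp_comm (hxray ξ hξ z)
    rw [show (∫ s : ℝ, m (z • perp ξ + s • ξ)) = L ξ z from rfl, hLall ξ hξ z] at hcomm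
    simpa using hcomm
  intro x
  exact Prod.ext (hg1 x) (hg2 x)
end
end
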